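/- The Jacobian of the action of M ∈ U(n,n) at Z ∈ H_n, viewed as a linear map on C^{n×n}, is W ↦ ((C̄Zᵀ+D̄)ᵀ)^{-1} W (CZ+D)^{-1}, and its determinant equals det(M)^n · det(CZ+D)^{-2n}. -/

import Mathlib

open Matrix
open scoped ComplexOrder

attribute [local instance] Matrix.normedAddCommGroup Matrix.normedSpace

/-- The matrix `J = [[0,-E],[E,0]]` defining the unitary group `U(n,n)`. -/
def Jmat (n : ℕ) : Matrix (Fin n ⊕ Fin n) (Fin n ⊕ Fin n) ℂ :=
  Matrix.fromBlocks 0 (-1) 1 0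

/-- `M ∈ U(n,n)` iff `M̄ᵀ J M = J`. -/
def inUnn (n : ℕ) (M : Matrix (Fin n ⊕ Fin n) (Fin n ⊕ Fin n) ℂ) : Prop :=
  Mᴴ * Jmat n * M = Jmat n

/-- `Z` lies in the hermitian half plane `H_n` iff `i(Z̄ᵀ - Z)` is positive definite. -/
def inHalfPlane (n : ℕ) (Z : Matrix (Fin n) (Fin n) ℂ) : Prop :=
  (Complex.I • (Zᴴ - Z)).PosDef

/-- The action `MZ = (AZ+B)(CZ+D)⁻¹` of `U(n,n)` on the hermitian half plane. -/
noncomputable def act (n : ℕ) (M : Matrix (Fin n ⊕ Fin n) (Fin n ⊕ Fin n) ℂ)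
    (Z : Matrix (Fin n) (Fin n) ℂ) : Matrix (Fin n) (Fin n) ℂ :=
  (M.toBlocks₁₁ * Z + M.toBlocks₁₂) * (M.toBlocks₂₁ * Z + M.toBlocks₂₂)⁻¹

/-- The linear endomorphism `W ↦ A W B` of the space of `n × n` complex matrices. -/
noncomputable def mulLeftRight (n : ℕ) (A B : Matrix (Fin n) (Fin n) ℂ) :
    Matrix (Fin n) (Fin n) ℂ →ₗ[ℂ] Matrix (Fin n) (Fin n) ℂ where
  toFun W := A * W * B
  map_add' W₁ W₂ := by simp only [Matrix.mul_add, Matrix.add_mul]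
  map_smul' c W := by simp [Matrix.mul_smul, Matrix.smul_mul]

open scoped Kronecker

/-! ### Auxiliary lemmas -/

lemma det_mulLeftRight (n : ℕ) (P Q : Matrix (Fin n) (Fin n) ℂ) :
    LinearMap.det (mulLeftRight n P Q) = P.det ^ n * Q.det ^ n := by
  classical
  let b := Matrix.stdBasis ℂ (Fin n) (Fin n)
  rw [← LinearMap.det_toMatrix b]
  have hb : LinearMap.toMatrix b b (mulLeftRight n P Q) = P ⊗ₖ Qᵀ := by
    ext ⟨i, j⟩ ⟨k, l⟩
    rw [LinearMap.toMatrix_apply]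
    have hrepr : ∀ (W : Matrix (Fin n) (Fin n) ℂ),
        (Matrix.stdBasis ℂ (Fin n) (Fin n)).repr W (i, j) = W i j := by
      intro W; simp [Matrix.stdBasis, Matrix.ofLinearEquiv]
    show (Matrix.stdBasis ℂ (Fin n) (Fin n)).repr
      ((mulLeftRight n P Q) (b (k, l))) (i, j) = _
    rw [hrepr]
    have : b (k, l) = Matrix.single k l 1 := Matrix.stdBasis_eq_single ℂ k l
    rw [this]
    simp only [mulLeftRight, LinearMap.coe_mk, AddHom.coe_mk]
    simp [Matrix.mul_apply, Matrix.single, Finset.sum_ite_eq, kroneckerMap_apply,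
      Finset.mul_sum, ite_and]
  rw [hb, Matrix.det_kronecker]
  simp [mul_comm]

lemma blocks_rel {n : ℕ} {M : Matrix (Fin n ⊕ Fin n) (Fin n ⊕ Fin n) ℂ} (hM : inUnn n M) :
    M.toBlocks₂₁ᴴ * M.toBlocks₁₁ - M.toBlocks₁₁ᴴ * M.toBlocks₂₁ = 0 ∧
    M.toBlocks₂₁ᴴ * M.toBlocks₁₂ - M.toBlocks₁₁ᴴ * M.toBlocks₂₂ = -1 ∧
    M.toBlocks₂₂ᴴ * M.toBlocks₁₁ - M.toBlocks₁₂ᴴ * M.toBlocks₂₁ = 1 ∧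
    M.toBlocks₂₂ᴴ * M.toBlocks₁₂ - M.toBlocks₁₂ᴴ * M.toBlocks₂₂ = 0 := by
  set A := M.toBlocks₁₁; set B := M.toBlocks₁₂; set C := M.toBlocks₂₁; set D := M.toBlocks₂₂
  have hM' : M = fromBlocks A B C D := (Matrix.fromBlocks_toBlocks M).symm
  rw [inUnn, hM', Jmat] at hM
  simp only [Matrix.fromBlocks_conjTranspose, Matrix.fromBlocks_multiply] at hM
  have h11 := congrArg Matrix.toBlocks₁₁ hM
  have h12 := congrArg Matrix.toBlocks₁₂ hM
  have h21 := congrArg Matrix.toBlocks₂₁ hM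
  have h22 := congrArg Matrix.toBlocks₂₂ hM
  simp only [Matrix.toBlocks_fromBlocks₁₁, Matrix.toBlocks_fromBlocks₁₂,
    Matrix.toBlocks_fromBlocks₂₁, Matrix.toBlocks_fromBlocks₂₂] at h11 h12 h21 h22
  refine ⟨?_, ?_, ?_, ?_⟩
  · simpa [Matrix.mul_assoc, sub_eq_add_neg] using h11
  · simpa [Matrix.mul_assoc, sub_eq_add_neg] using h12
  · simpa [Matrix.mul_assoc, sub_eq_add_neg] using h21
  · simpa [Matrix.mul_assoc, sub_eq_add_neg] using h22

lemma g_invertible {n : ℕ} {M : Matrix (Fin n ⊕ Fin n) (Fin n ⊕ Fin n) ℂ} (hM : inUnn n M)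
    {Z : Matrix (Fin n) (Fin n) ℂ} (hZ : inHalfPlane n Z) :
    IsUnit (M.toBlocks₂₁ * Z + M.toBlocks₂₂).det := by
  set A := M.toBlocks₁₁; set B := M.toBlocks₁₂; set C := M.toBlocks₂₁; set D := M.toBlocks₂₂
  by_contra hdet
  rw [isUnit_iff_ne_zero, not_not] at hdet
  obtain ⟨v, hv0, hv⟩ := (Matrix.exists_mulVec_eq_zero_iff).2 hdet
  set x : (Fin n ⊕ Fin n) → ℂ := Sum.elim (Z.mulVec v) v with hx
  have hMx : M.mulVec x = Sum.elim ((A * Z + B).mulVec v) 0 := by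
    have hM' : M = fromBlocks A B C D := (Matrix.fromBlocks_toBlocks M).symm
    rw [hx, hM', Matrix.fromBlocks_mulVec]
    simp only [Sum.elim_comp_inl, Sum.elim_comp_inr, Matrix.mulVec_mulVec,
      ← Matrix.add_mulVec, hv]
  have key : ∀ y : (Fin n ⊕ Fin n) → ℂ,
      star y ⬝ᵥ (Jmat n).mulVec y
        = star (y ∘ Sum.inr) ⬝ᵥ (y ∘ Sum.inl) - star (y ∘ Sum.inl) ⬝ᵥ (y ∘ Sum.inr) := by
    intro y
    have : y = Sum.elim (y ∘ Sum.inl) (y ∘ Sum.inr) := by ext i; cases i <;> rfl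
    rw [this]
    rw [Jmat, Matrix.fromBlocks_mulVec]
    simp [dotProduct, Fintype.sum_sum_type, Matrix.mulVec, Matrix.one_apply, ite_mul,
      sub_eq_add_neg, add_comm, mul_comm]
  have hq : star x ⬝ᵥ (Jmat n).mulVec x = 0 := by
    have step : star x ⬝ᵥ (Jmat n).mulVec x
        = star (M.mulVec x) ⬝ᵥ (Jmat n).mulVec (M.mulVec x) := by
      conv_lhs => rw [← hM]
      rw [Matrix.mul_assoc, ← Matrix.mulVec_mulVec, Matrix.dotProduct_mulVec,
        ← Matrix.star_mulVec, ← Matrix.mulVec_mulVec]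
    rw [step, hMx, key]
    simp
  rw [key] at hq
  simp only [hx, Sum.elim_comp_inl, Sum.elim_comp_inr] at hq
  have hpos := hZ.dotProduct_mulVec_pos hv0
  rw [Matrix.smul_mulVec, Matrix.sub_mulVec, dotProduct_smul,
    dotProduct_sub] at hpos
  have hherm : star v ⬝ᵥ Zᴴ.mulVec v = star (Z.mulVec v) ⬝ᵥ v := by
    rw [Matrix.dotProduct_mulVec, ← Matrix.star_mulVec]
  rw [hherm, sub_eq_zero.mp hq] at hpos
  simp at hpos

/-- The key algebraic identity: `(ZCᴴ+Dᴴ)(A - (AZ+B)(CZ+D)⁻¹C) = 1`. -/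
lemma key_identity {n : ℕ} {M : Matrix (Fin n ⊕ Fin n) (Fin n ⊕ Fin n) ℂ} (hM : inUnn n M)
    {Z : Matrix (Fin n) (Fin n) ℂ}
    (hg : IsUnit (M.toBlocks₂₁ * Z + M.toBlocks₂₂).det) :
    (Z * M.toBlocks₂₁ᴴ + M.toBlocks₂₂ᴴ) *
      (M.toBlocks₁₁ - (M.toBlocks₁₁ * Z + M.toBlocks₁₂)
        * (M.toBlocks₂₁ * Z + M.toBlocks₂₂)⁻¹ * M.toBlocks₂₁) = 1 := by
  set A := M.toBlocks₁₁; set B := M.toBlocks₁₂; set C := M.toBlocks₂₁; set D := M.toBlocks₂₂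
  obtain ⟨e1, e2, e3, e4⟩ := blocks_rel hM
  set g : Matrix (Fin n) (Fin n) ℂ := C * Z + D with hgdef
  have K1 : (Z * Cᴴ + Dᴴ) * (A * Z + B) = (Z * Aᴴ + Bᴴ) * g := by
    have expand : (Z * Cᴴ + Dᴴ) * (A * Z + B) - (Z * Aᴴ + Bᴴ) * g
        = Z * (Cᴴ * A - Aᴴ * C) * Z + Z * (Cᴴ * B - Aᴴ * D)
          + (Dᴴ * A - Bᴴ * C) * Z + (Dᴴ * B - Bᴴ * D) := by
      rw [hgdef]; noncomm_ring
    rw [← sub_eq_zero, expand, e1, e2, e3, e4]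
    simp
  have K2 : (Z * Cᴴ + Dᴴ) * ((A * Z + B) * g⁻¹) = Z * Aᴴ + Bᴴ := by
    rw [← Matrix.mul_assoc, K1, Matrix.mul_nonsing_inv_cancel_right _ _ hg]
  have expand2 : (Z * Cᴴ + Dᴴ) * (A - (A * Z + B) * g⁻¹ * C)
      = Z * (Cᴴ * A - Aᴴ * C) + (Dᴴ * A - Bᴴ * C)
        + ((Z * Aᴴ + Bᴴ) - (Z * Cᴴ + Dᴴ) * ((A * Z + B) * g⁻¹)) * C := by
    noncomm_ring
  rw [expand2, K2, e1, e3]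
  simp

/-- The statement's matrix `(C̄Zᵀ+D̄)ᵀ` equals `ZCᴴ+Dᴴ`. -/
lemma stmt_matrix_eq {n : ℕ} (M : Matrix (Fin n ⊕ Fin n) (Fin n ⊕ Fin n) ℂ)
    (Z : Matrix (Fin n) (Fin n) ℂ) :
    (M.toBlocks₂₁.map (starRingEnd ℂ) * Zᵀ + M.toBlocks₂₂.map (starRingEnd ℂ))ᵀ
      = Z * M.toBlocks₂₁ᴴ + M.toBlocks₂₂ᴴ := by
  ext i j
  simp [Matrix.transpose_apply, Matrix.add_apply, Matrix.mul_apply, Matrix.conjTranspose_apply,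
    Matrix.map_apply, mul_comm]

/-- Entrywise sup norm is submultiplicative up to a factor `n`. -/
lemma matrix_norm_mul_le {n : ℕ} (X Y : Matrix (Fin n) (Fin n) ℂ) :
    ‖X * Y‖ ≤ n * ‖X‖ * ‖Y‖ := by
  have h0 : (0:ℝ) ≤ n * ‖X‖ * ‖Y‖ := by positivity
  rw [Matrix.norm_le_iff h0]
  intro i j
  calc ‖(X * Y) i j‖ = ‖∑ k, X i k * Y k j‖ := by rw [Matrix.mul_apply]
  _ ≤ ∑ k, ‖X i k * Y k j‖ := norm_sum_le _ _
  _ ≤ ∑ _k : Fin n, ‖X‖ * ‖Y‖ := by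
      refine Finset.sum_le_sum fun k _ => ?_
      rw [norm_mul]
      exact mul_le_mul (Matrix.norm_entry_le_entrywise_sup_norm X)
        (Matrix.norm_entry_le_entrywise_sup_norm Y) (norm_nonneg _) (norm_nonneg _)
  _ = n * ‖X‖ * ‖Y‖ := by simp [mul_assoc]

theorem jacobian_act (n : ℕ)
    (M : Matrix (Fin n ⊕ Fin n) (Fin n ⊕ Fin n) ℂ) (hM : inUnn n M)
    (Z : Matrix (Fin n) (Fin n) ℂ) (hZ : inHalfPlane n Z) :
    HasFDerivAt (fun W => act n M W)
      (LinearMap.toContinuousLinearMap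
        (mulLeftRight n
          ((M.toBlocks₂₁.map (starRingEnd ℂ) * Zᵀ + M.toBlocks₂₂.map (starRingEnd ℂ))ᵀ)⁻¹
          (M.toBlocks₂₁ * Z + M.toBlocks₂₂)⁻¹)) Z ∧
    LinearMap.det
        (mulLeftRight n
          ((M.toBlocks₂₁.map (starRingEnd ℂ) * Zᵀ + M.toBlocks₂₂.map (starRingEnd ℂ))ᵀ)⁻¹
          (M.toBlocks₂₁ * Z + M.toBlocks₂₂)⁻¹)
      = M.det ^ n * ((M.toBlocks₂₁ * Z + M.toBlocks₂₂).det)⁻¹ ^ (2 * n) := by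
  classical
  set A := M.toBlocks₁₁ with hA
  set B := M.toBlocks₁₂ with hB
  set C := M.toBlocks₂₁ with hC
  set D := M.toBlocks₂₂ with hD
  set g : Matrix (Fin n) (Fin n) ℂ := C * Z + D with hgdef
  have hg : IsUnit g.det := g_invertible hM hZ
  set F : Matrix (Fin n) (Fin n) ℂ := A - (A * Z + B) * g⁻¹ * C with hFdef
  have hEF : (Z * Cᴴ + Dᴴ) * F = 1 := key_identity hM hg
  have hFE : F * (Z * Cᴴ + Dᴴ) = 1 := mul_eq_one_comm.mp hEF
  have hEinv : (Z * Cᴴ + Dᴴ)⁻¹ = F := Matrix.inv_eq_right_inv hEF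
  have hstmt : (C.map (starRingEnd ℂ) * Zᵀ + D.map (starRingEnd ℂ))ᵀ = Z * Cᴴ + Dᴴ :=
    stmt_matrix_eq M Z
  -- determinant identity : det M = det g * det F
  have hdetM : M.det = g.det * F.det := by
    have hM' : M = fromBlocks A B C D := (Matrix.fromBlocks_toBlocks M).symm
    have hmul : M * fromBlocks 1 Z 0 1 = fromBlocks A (A * Z + B) C g := by
      rw [hM', Matrix.fromBlocks_multiply]
      simp [hgdef]
    have hdet1 : (fromBlocks (1 : Matrix (Fin n) (Fin n) ℂ) Z 0 1).det = 1 := by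
      rw [Matrix.det_fromBlocks_zero₂₁]; simp
    have := congrArg Matrix.det hmul
    rw [Matrix.det_mul, hdet1, mul_one] at this
    rw [this]
    have : Invertible g := Matrix.invertibleOfIsUnitDet g hg
    rw [Matrix.det_fromBlocks₂₂, Matrix.invOf_eq_nonsing_inv]
  constructor
  · -- the derivative
    refine hasFDerivAt_iff_isLittleO_nhds_zero.mpr ?_
    have happ : ∀ h : Matrix (Fin n) (Fin n) ℂ,
        (LinearMap.toContinuousLinearMap
          (mulLeftRight n
            ((C.map (starRingEnd ℂ) * Zᵀ + D.map (starRingEnd ℂ))ᵀ)⁻¹ g⁻¹)) h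
          = F * h * g⁻¹ := by
      intro h
      simp only [LinearMap.coe_toContinuousLinearMap']
      rw [show ((mulLeftRight n ((C.map (starRingEnd ℂ) * Zᵀ + D.map (starRingEnd ℂ))ᵀ)⁻¹ g⁻¹) h
        = ((C.map (starRingEnd ℂ) * Zᵀ + D.map (starRingEnd ℂ))ᵀ)⁻¹ * h * g⁻¹) from rfl,
        hstmt, hEinv]
    set φ : Matrix (Fin n) (Fin n) ℂ → Matrix (Fin n) (Fin n) ℂ :=
      fun h => (g + C * h)⁻¹ - g⁻¹ with hφ
    have hcont : Filter.Tendsto φ (nhds 0) (nhds 0) := by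
      have hdet : g.det ≠ 0 := by
        intro h0; rw [h0] at hg; exact (by simpa using hg : IsUnit (0:ℂ)).ne_zero rfl
      have hinv : ContinuousAt Inv.inv g := by
        refine continuousAt_matrix_inv g ?_
        rw [Ring.inverse_eq_inv']
        exact continuousAt_inv₀ hdet
      have haff : Filter.Tendsto (fun h : Matrix (Fin n) (Fin n) ℂ => g + C * h)
          (nhds 0) (nhds g) := by
        have : Continuous (fun h : Matrix (Fin n) (Fin n) ℂ => g + C * h) :=
          continuous_const.add (continuous_const.matrix_mul continuous_id)
        have := this.tendsto 0
        simpa using this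
      have h1 : Filter.Tendsto (fun h : Matrix (Fin n) (Fin n) ℂ => (g + C * h)⁻¹)
          (nhds 0) (nhds g⁻¹) := hinv.tendsto.comp haff
      have := h1.sub (tendsto_const_nhds (x := g⁻¹))
      simpa [hφ] using this
    have hev : ∀ᶠ h : Matrix (Fin n) (Fin n) ℂ in nhds 0, IsUnit (g + C * h).det := by
      have hdt : Filter.Tendsto (fun h : Matrix (Fin n) (Fin n) ℂ => (g + C * h).det)
          (nhds 0) (nhds g.det) := by
        have : Continuous (fun h : Matrix (Fin n) (Fin n) ℂ => (g + C * h).det) :=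
          (continuous_const.add (continuous_const.matrix_mul continuous_id)).matrix_det
        simpa using this.tendsto 0
      have hdet : g.det ≠ 0 := by
        intro h0; rw [h0] at hg; exact (by simpa using hg : IsUnit (0:ℂ)).ne_zero rfl
      filter_upwards [hdt.eventually_ne hdet] with h hh
      exact isUnit_iff_ne_zero.mpr hh
    have hid : ∀ᶠ h : Matrix (Fin n) (Fin n) ℂ in nhds 0,
        act n M (Z + h) - act n M Z - F * h * g⁻¹ = F * h * φ h := by
      filter_upwards [hev] with h hu
      have hgh : C * (Z + h) + D = g + C * h := by rw [hgdef]; noncomm_ring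
      have hact0 : act n M Z = (A * Z + B) * g⁻¹ := rfl
      have hnum : A * (Z + h) + B = act n M Z * (g + C * h) + F * h := by
        rw [hact0, hFdef]
        have hcancel : (A * Z + B) * g⁻¹ * g = A * Z + B :=
          Matrix.nonsing_inv_mul_cancel_right _ _ hg
        have expand : (A * Z + B) * g⁻¹ * (g + C * h) + (A - (A * Z + B) * g⁻¹ * C) * h
            = (A * Z + B) * g⁻¹ * g + A * h := by noncomm_ring
        rw [expand, hcancel]
        noncomm_ring
      have hact : act n M (Z + h) = act n M Z + F * h * (g + C * h)⁻¹ := by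
        show (A * (Z + h) + B) * (C * (Z + h) + D)⁻¹ = _
        rw [hgh, hnum, Matrix.add_mul, Matrix.mul_nonsing_inv_cancel_right _ _ hu]
      rw [hact, hφ]
      rw [Matrix.mul_sub]
      abel
    have main : (fun h : Matrix (Fin n) (Fin n) ℂ => F * h * φ h)
        =o[nhds 0] (fun h : Matrix (Fin n) (Fin n) ℂ => h) := by
      rw [Asymptotics.isLittleO_iff]
      intro ε hε
      set c : ℝ := (n : ℝ) * ((n : ℝ) * ‖F‖) with hc
      have hc0 : 0 ≤ c := by positivity
      have hsmall : ∀ᶠ h : Matrix (Fin n) (Fin n) ℂ in nhds 0, ‖φ h‖ ≤ ε / (c + 1) := by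
        have : ∀ᶠ y : Matrix (Fin n) (Fin n) ℂ in nhds 0, ‖y‖ < ε / (c + 1) := by
          have hpos : 0 < ε / (c + 1) := by positivity
          refine Filter.eventually_of_mem
            (Metric.ball_mem_nhds (0 : Matrix (Fin n) (Fin n) ℂ) hpos) fun y hy => ?_
          simpa [mem_ball_zero_iff] using hy
        filter_upwards [hcont.eventually this] with h hh using le_of_lt hh
      filter_upwards [hsmall] with h hh
      have b1 : ‖F * h * φ h‖ ≤ (n : ℝ) * ‖F * h‖ * ‖φ h‖ := matrix_norm_mul_le _ _
      have b2 : ‖F * h‖ ≤ (n : ℝ) * ‖F‖ * ‖h‖ := matrix_norm_mul_le _ _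
      have b3 : ‖F * h * φ h‖ ≤ c * ‖h‖ * ‖φ h‖ := by
        calc ‖F * h * φ h‖ ≤ (n : ℝ) * ‖F * h‖ * ‖φ h‖ := b1
        _ ≤ (n : ℝ) * ((n : ℝ) * ‖F‖ * ‖h‖) * ‖φ h‖ := by
            have hn0 : (0:ℝ) ≤ (n:ℝ) := by positivity
            exact mul_le_mul_of_nonneg_right (mul_le_mul_of_nonneg_left b2 hn0) (norm_nonneg _)
        _ = c * ‖h‖ * ‖φ h‖ := by ring
      calc ‖F * h * φ h‖ ≤ c * ‖h‖ * ‖φ h‖ := b3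
      _ ≤ c * ‖h‖ * (ε / (c + 1)) := by
          exact mul_le_mul_of_nonneg_left hh (by positivity)
      _ ≤ ε * ‖h‖ := by
          rw [div_eq_mul_inv]
          have h1 : c * ‖h‖ * (ε * (c + 1)⁻¹) = (c * (c + 1)⁻¹) * (ε * ‖h‖) := by ring
          rw [h1]
          have h2 : c * (c + 1)⁻¹ ≤ 1 := by
            rw [mul_inv_le_iff₀ (by positivity)]; linarith
          have h3 : 0 ≤ ε * ‖h‖ := by positivity
          simpa using mul_le_mul_of_nonneg_right h2 h3
    refine main.congr' ?_ (Filter.EventuallyEq.refl _ _)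
    filter_upwards [hid] with h hh
    refine Eq.trans ?_ (congrArg (fun t => act n M (Z + h) - act n M Z - t) (happ h).symm)
    exact hh.symm
  · -- the determinant
    rw [hstmt, hEinv, det_mulLeftRight]
    have hdetg : g.det ≠ 0 := by
      intro h0; rw [h0] at hg; exact (by simpa using hg : IsUnit (0:ℂ)).ne_zero rfl
    have hFd : F.det = M.det * (g.det)⁻¹ := by
      rw [hdetM]; field_simp
    rw [Matrix.det_nonsing_inv, Ring.inverse_eq_inv', hFd]
    ring
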